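/- Let z ∈ ℝⁿ be nonnegative, γ a finite sequence of edges of G, and e an edge of G; set γ' = γ followed by e, z_γ = P_γ z and z_{γ'} = P_{γ'} z, where P denotes the ordered product of the corresponding local stochastic matrices. If supp(z_{γ'}) = supp(z_γ), then the minimum nonzero entry of z_{γ'} is at least the minimum nonzero entry of z_γ. -/
import Mathlib


open Matrix Finset

/-- The local stochastic matrix `A_{ij}`: identity except for the 2×2 principal
submatrix on rows/columns `i,j`, which is `[[1-a_{ij}, a_{ij}],[a_{ji}, 1-a_{ji}]]`. -/
def locMat {n : ℕ} (a : Fin n → Fin n → ℝ) (i j : Fin n) : Matrix (Fin n) (Fin n) ℝ :=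
  Matrix.of fun k l =>
    if k = i then (if l = i then 1 - a i j else if l = j then a i j else 0)
    else if k = j then (if l = i then a j i else if l = j then 1 - a j i else 0)
    else if k = l then 1 else 0

/-- `R_w`: the product of the ratios `r` along the (directed) edges of a walk `w`. -/
def Rwalk {n : ℕ} (r : Fin n → Fin n → ℝ) {G : SimpleGraph (Fin n)} {u v : Fin n}
    (w : G.Walk u v) : ℝ :=
  (w.darts.map fun d => r d.toProd.1 d.toProd.2).prod

/-- The local stochastic matrices (given by the weights `a`) are holonomic for `G`:
`R_C = 1` for every cycle `C` of length greater than 2. -/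
def Holonomic {n : ℕ} (G : SimpleGraph (Fin n)) (a : Fin n → Fin n → ℝ) : Prop :=
  ∀ (u : Fin n) (c : G.Walk u u), c.IsCycle → 2 < c.length →
    Rwalk (fun i j => a i j / a j i) c = 1

/-- The product `P_γ = A_{e_k} ⋯ A_{e_1}` of local stochastic matrices along a finite
sequence of edges `γ = e_1 … e_k`. -/
def seqProd {n : ℕ} (a : Fin n → Fin n → ℝ) :
    List (Fin n × Fin n) → Matrix (Fin n) (Fin n) ℝ
  | [] => 1
  | e :: t => seqProd a t * locMat a e.1 e.2

lemma seqProd_append {n : ℕ} (a : Fin n → Fin n → ℝ) (γ : List (Fin n × Fin n))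
    (e : Fin n × Fin n) :
    seqProd a (γ ++ [e]) = locMat a e.1 e.2 * seqProd a γ := by
  induction γ with
  | nil => simp [seqProd]
  | cons x t ih => simp [seqProd, ih, Matrix.mul_assoc]

lemma locMat_mulVec {n : ℕ} (a : Fin n → Fin n → ℝ) (i j : Fin n) (hij : i ≠ j)
    (w : Fin n → ℝ) (k : Fin n) :
    (locMat a i j).mulVec w k =
      if k = i then (1 - a i j) * w i + a i j * w j
      else if k = j then a j i * w i + (1 - a j i) * w j
      else w k := by
  have key : ∀ c1 c2 : ℝ,
      ∑ l, (if l = i then c1 else if l = j then c2 else 0) * w l = c1 * w i + c2 * w j := by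
    intro c1 c2
    have : (fun l => (if l = i then c1 else if l = j then c2 else 0) * w l)
        = fun l => (if l = i then c1 * w i else 0) + (if l = j then c2 * w j else 0) := by
      funext l
      by_cases h1 : l = i <;> by_cases h2 : l = j <;>
        simp [h1, h2] at * <;> simp_all
    rw [show (∑ l, (if l = i then c1 else if l = j then c2 else 0) * w l)
        = ∑ l, ((if l = i then c1 * w i else 0) + (if l = j then c2 * w j else 0)) from by
          exact Finset.sum_congr rfl fun l _ => congrFun this l,
      Finset.sum_add_distrib, Finset.sum_ite_eq' , Finset.sum_ite_eq']
    simp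
  unfold Matrix.mulVec dotProduct locMat
  by_cases hk1 : k = i
  · simp only [hk1, of_apply, if_pos rfl]
    exact key _ _
  · by_cases hk2 : k = j
    · simp only [hk2, of_apply, if_neg (by simpa using hij.symm), if_pos rfl, if_neg hij.symm]
      exact key _ _
    · simp only [of_apply, if_neg hk1, if_neg hk2]
      have : (∑ l, (if k = l then (1:ℝ) else 0) * w l) = ∑ l, (if l = k then w l else 0) := by
        refine Finset.sum_congr rfl fun l _ => ?_
        rcases eq_or_ne l k with h | h
        · subst h; simp
        · simp [h, Ne.symm h]
      rw [this]
      simp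

lemma locMat_entry_nonneg {n : ℕ} (a : Fin n → Fin n → ℝ) (i j : Fin n)
    (h1 : 0 ≤ a i j) (h2 : a i j ≤ 1) (h3 : 0 ≤ a j i) (h4 : a j i ≤ 1) (k l : Fin n) :
    0 ≤ locMat a i j k l := by
  unfold locMat
  simp only [of_apply]
  split_ifs <;> linarith

lemma seqProd_entry_nonneg {n : ℕ} (G : SimpleGraph (Fin n)) (a : Fin n → Fin n → ℝ)
    (ha : ∀ i j, G.Adj i j → a i j ∈ Set.Ioo (0:ℝ) 1)
    (γ : List (Fin n × Fin n)) (hγ : ∀ e ∈ γ, G.Adj e.1 e.2) (k l : Fin n) :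
    0 ≤ seqProd a γ k l := by
  induction γ generalizing k l with
  | nil =>
    simp only [seqProd, Matrix.one_apply]
    split_ifs <;> norm_num
  | cons x t ih =>
    have hx : G.Adj x.1 x.2 := hγ x (by simp)
    have h1 := ha x.1 x.2 hx
    have h2 := ha x.2 x.1 hx.symm
    simp only [seqProd, Matrix.mul_apply]
    refine Finset.sum_nonneg fun m _ => mul_nonneg (ih (fun e he => hγ e (by simp [he])) k m)
      (locMat_entry_nonneg a x.1 x.2 h1.1.le h1.2.le h2.1.le h2.2.le m l)

/-- The smallest nonzero entry of a vector. -/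
noncomputable def minNZ {n : ℕ} (z : Fin n → ℝ) : ℝ :=
  sInf {x : ℝ | x ≠ 0 ∧ ∃ i, z i = x}

/-- If appending one more edge `e` to the sequence `γ` does not change the support of
`z_γ = P_γ z`, then the minimum nonzero entry does not decrease. -/
theorem stmt8 {n : ℕ} (G : SimpleGraph (Fin n)) (hGc : G.Connected)
    (a : Fin n → Fin n → ℝ) (ha : ∀ i j, G.Adj i j → a i j ∈ Set.Ioo (0:ℝ) 1)
    (z : Fin n → ℝ) (hz : ∀ i, 0 ≤ z i)
    (γ : List (Fin n × Fin n)) (hγ : ∀ e ∈ γ, G.Adj e.1 e.2)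
    (e : Fin n × Fin n) (he : G.Adj e.1 e.2)
    (hsupp : {i | (seqProd a (γ ++ [e])).mulVec z i ≠ 0}
           = {i | (seqProd a γ).mulVec z i ≠ 0}) :
    minNZ ((seqProd a γ).mulVec z) ≤ minNZ ((seqProd a (γ ++ [e])).mulVec z) := by
  have hij : e.1 ≠ e.2 := he.ne
  obtain ⟨ha1, ha1'⟩ := ha e.1 e.2 he
  obtain ⟨ha2, ha2'⟩ := ha e.2 e.1 he.symm
  set w : Fin n → ℝ := (seqProd a γ).mulVec z with hw_def
  set w' : Fin n → ℝ := (seqProd a (γ ++ [e])).mulVec z with hw'_def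
  have hweq : ∀ k, w' k =
      if k = e.1 then (1 - a e.1 e.2) * w e.1 + a e.1 e.2 * w e.2
      else if k = e.2 then a e.2 e.1 * w e.1 + (1 - a e.2 e.1) * w e.2 else w k := by
    intro k
    rw [hw'_def, seqProd_append, ← Matrix.mulVec_mulVec, locMat_mulVec a e.1 e.2 hij]
  have hw0 : ∀ k, 0 ≤ w k := by
    intro k
    rw [hw_def]
    simp only [Matrix.mulVec, dotProduct]
    exact Finset.sum_nonneg fun l _ =>
      mul_nonneg (seqProd_entry_nonneg G a ha γ hγ k l) (hz l)
  have hsupp' : ∀ k, w' k ≠ 0 ↔ w k ≠ 0 := fun k => Set.ext_iff.mp hsupp k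
  have h12 : w e.1 ≠ 0 → w e.2 ≠ 0 := by
    intro h1
    have hpos : 0 < w e.1 := lt_of_le_of_ne (hw0 e.1) (Ne.symm h1)
    have : 0 < w' e.2 := by
      rw [hweq e.2, if_neg (Ne.symm hij), if_pos rfl]
      have := hw0 e.2
      nlinarith
    exact (hsupp' e.2).mp this.ne'
  have h21 : w e.2 ≠ 0 → w e.1 ≠ 0 := by
    intro h2
    have hpos : 0 < w e.2 := lt_of_le_of_ne (hw0 e.2) (Ne.symm h2)
    have : 0 < w' e.1 := by
      rw [hweq e.1, if_pos rfl]
      have := hw0 e.1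
      nlinarith
    exact (hsupp' e.1).mp this.ne'
  set S : Set ℝ := {x : ℝ | x ≠ 0 ∧ ∃ i, w i = x} with hS_def
  set S' : Set ℝ := {x : ℝ | x ≠ 0 ∧ ∃ i, w' i = x} with hS'_def
  have hbddS : BddBelow S := ⟨0, fun x hx => by obtain ⟨_, i, hi⟩ := hx; exact hi ▸ hw0 i⟩
  show sInf S ≤ sInf S'
  rcases S'.eq_empty_or_nonempty with hS' | hS'
  · have hSe : S = ∅ := by
      rw [Set.eq_empty_iff_forall_notMem]
      rintro x ⟨hx0, k, hk⟩
      have hk' : w' k ≠ 0 := (hsupp' k).mpr (hk ▸ hx0)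
      exact Set.eq_empty_iff_forall_notMem.mp hS' (w' k) ⟨hk', k, rfl⟩
    rw [hSe, hS']
  · refine le_csInf hS' ?_
    rintro x ⟨hx0, k, hk⟩
    rcases eq_or_ne k e.1 with hk1 | hk1
    · subst hk1
      rw [hweq e.1, if_pos rfl] at hk
      have h1 : w e.1 ≠ 0 := by
        by_contra h1
        have h2 : w e.2 = 0 := by
          by_contra h2; exact (h21 h2) h1
        rw [← hk, h1, h2] at hx0; simp at hx0
      have h2 : w e.2 ≠ 0 := h12 h1
      have hm : min (w e.1) (w e.2) ∈ S := by
        rcases min_choice (w e.1) (w e.2) with h | h <;> rw [h]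
        · exact ⟨h1, e.1, rfl⟩
        · exact ⟨h2, e.2, rfl⟩
      refine le_trans (csInf_le hbddS hm) ?_
      have hm1 := min_le_left (w e.1) (w e.2)
      have hm2 := min_le_right (w e.1) (w e.2)
      nlinarith
    · rcases eq_or_ne k e.2 with hk2 | hk2
      · subst hk2
        rw [hweq e.2, if_neg hk1, if_pos rfl] at hk
        have h2 : w e.2 ≠ 0 := by
          by_contra h2
          have h1 : w e.1 = 0 := by
            by_contra h1; exact (h12 h1) h2
          rw [← hk, h1, h2] at hx0; simp at hx0
        have h1 : w e.1 ≠ 0 := h21 h2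
        have hm : min (w e.1) (w e.2) ∈ S := by
          rcases min_choice (w e.1) (w e.2) with h | h <;> rw [h]
          · exact ⟨h1, e.1, rfl⟩
          · exact ⟨h2, e.2, rfl⟩
        refine le_trans (csInf_le hbddS hm) ?_
        have hm1 := min_le_left (w e.1) (w e.2)
        have hm2 := min_le_right (w e.1) (w e.2)
        nlinarith
      · rw [hweq k, if_neg hk1, if_neg hk2] at hk
        exact csInf_le hbddS ⟨hx0, k, hk⟩
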